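/- Let ℱ ⊆ 𝒢 be sub-σ-algebras, p ∈ [1,∞), N ∈ ℕ, and let U : L^p_ℱ(𝒢) → L^0(ℱ) ∪ {−∞} be L^0–L^p upper semicontinuous. Let Δ ∈ (L^p_ℱ(𝒢))^N, let (A_n) ⊆ (L^0(ℱ))^N converge a.s. to A ∈ (L^0(ℱ))^N, and let (Γ_n) be a sequence bounded in L^p_ℱ(𝒢) with Γ_n → Γ a.s. Then limsup_n U(A_n·Δ + Γ_n) ≤ U(A·Δ + Γ) a.s. In particular (taking Γ_n = 0) the map A ∈ (L^0(ℱ))^N ↦ U(A·Δ) is L^0-upper semicontinuous. -/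

import Mathlib

open MeasureTheory Filter
open scoped ENNReal

variable {Ω : Type*} {m0 : MeasurableSpace Ω}

/-- The conditional expectation `E[|X|^p | F]`, with values in `[0,∞]`, defined through
monotone truncation. -/
noncomputable def condExpAbsPow (μ : Measure Ω) (F : MeasurableSpace Ω) (p : ℝ)
    (X : Ω → ℝ) : Ω → ℝ≥0∞ :=
  fun ω => ⨆ n : ℕ, ENNReal.ofReal ((μ[fun ω' => min (|X ω'| ^ p) (n : ℝ) | F]) ω)

/-- `X ∈ L^p_F(G)`: the conditional `p`-th moment is a.s. finite. -/
def MemCondLp (μ : Measure Ω) (F : MeasurableSpace Ω) (p : ℝ) (X : Ω → ℝ) : Prop :=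
  ∀ᵐ ω ∂μ, condExpAbsPow μ F p X ω < ⊤

/-- A sequence is bounded in `L^p_F(G)`: the conditional `p`-th moments are uniformly
dominated by a finite `F`-measurable random variable. -/
def BddCondLp (μ : Measure Ω) (F : MeasurableSpace Ω) (p : ℝ) (Xs : ℕ → Ω → ℝ) : Prop :=
  ∃ Y : Ω → ℝ, Measurable[F] Y ∧
    ∀ n, ∀ᵐ ω ∂μ, condExpAbsPow μ F p (Xs n) ω ≤ ENNReal.ofReal (Y ω)

/-- giant truncation functional -/
noncomputable def tnn (μ : Measure Ω) (F : MeasurableSpace Ω) (f : Ω → ℝ) (ω : Ω) : ℝ≥0∞ :=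
  ⨆ k : ℕ, ENNReal.ofReal ((μ[fun ω' => min (f ω') (k : ℝ)|F]) ω)

lemma integrable_min_nat {μ : Measure Ω} [IsProbabilityMeasure μ] {f : Ω → ℝ}
    (hf : Measurable f) (hf0 : ∀ ω, 0 ≤ f ω) (k : ℕ) :
    Integrable (fun ω => min (f ω) (k : ℝ)) μ := by
  refine Integrable.mono' (integrable_const (k : ℝ)) ?_ ?_
  · exact (hf.min measurable_const).aestronglyMeasurable
  · refine ae_of_all _ fun ω => ?_
    rw [Real.norm_eq_abs, abs_of_nonneg (le_min (hf0 ω) (by positivity))]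
    exact min_le_right _ _

lemma min_add_le_aux {a b k : ℝ} (ha : 0 ≤ a) (hb : 0 ≤ b) (hk : 0 ≤ k) :
    min (a + b) k ≤ min a k + min b k := by
  rcases le_total k a with h | h
  · calc min (a + b) k ≤ k := min_le_right _ _
      _ = min a k := (min_eq_right h).symm
      _ ≤ min a k + min b k := le_add_of_nonneg_right (le_min hb hk)
  · rcases le_total k b with h' | h'
    · calc min (a + b) k ≤ k := min_le_right _ _
        _ = min b k := (min_eq_right h').symm
        _ ≤ min a k + min b k := le_add_of_nonneg_left (le_min ha hk)
    · calc min (a + b) k ≤ a + b := min_le_left _ _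
        _ = min a k + min b k := by rw [min_eq_left h, min_eq_left h']

lemma min_mul_le_aux {q a k : ℝ} (hq : 1 ≤ q) (hk : 0 ≤ k) :
    min (q * a) k ≤ q * min a k := by
  rcases le_total a k with h | h
  · rw [min_eq_left h]; exact min_le_left _ _
  · rw [min_eq_right h]
    exact le_trans (min_le_right _ _) (le_mul_of_one_le_left hk hq)

lemma tnn_mono {μ : Measure Ω} [IsProbabilityMeasure μ] {F : MeasurableSpace Ω} {f g : Ω → ℝ}
    (hf : Measurable[m0] f) (hg : Measurable[m0] g) (hf0 : ∀ ω, 0 ≤ f ω) (hfg : ∀ ω, f ω ≤ g ω) :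
    ∀ᵐ ω ∂μ, tnn μ F f ω ≤ tnn μ F g ω := by
  have hg0 : ∀ ω, 0 ≤ g ω := fun ω => (hf0 ω).trans (hfg ω)
  have h : ∀ k : ℕ, (μ[fun ω' => min (f ω') (k : ℝ)|F]) ≤ᵐ[μ] (μ[fun ω' => min (g ω') (k : ℝ)|F]) :=
    fun k => condExp_mono (integrable_min_nat (μ := μ) hf hf0 k) (integrable_min_nat (μ := μ) hg hg0 k)
      (ae_of_all _ fun ω => min_le_min (hfg ω) le_rfl)
  filter_upwards [ae_all_iff.2 h] with ω hω
  exact iSup_mono fun k => ENNReal.ofReal_le_ofReal (hω k)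

lemma tnn_add_le {μ : Measure Ω} [IsProbabilityMeasure μ] {F : MeasurableSpace Ω} {f g : Ω → ℝ}
    (hf : Measurable[m0] f) (hg : Measurable[m0] g) (hf0 : ∀ ω, 0 ≤ f ω) (hg0 : ∀ ω, 0 ≤ g ω) :
    ∀ᵐ ω ∂μ, tnn μ F (fun ω' => f ω' + g ω') ω ≤ tnn μ F f ω + tnn μ F g ω := by
  have h : ∀ k : ℕ, ∀ᵐ ω ∂μ, (μ[fun ω' => min (f ω' + g ω') (k : ℝ)|F]) ω ≤
      (μ[fun ω' => min (f ω') (k : ℝ)|F]) ω + (μ[fun ω' => min (g ω') (k : ℝ)|F]) ω := by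
    intro k
    have hi1 := integrable_min_nat (μ := μ) hf hf0 k
    have hi2 := integrable_min_nat (μ := μ) hg hg0 k
    have hmono : (μ[fun ω' => min (f ω' + g ω') (k : ℝ)|F]) ≤ᵐ[μ]
        (μ[(fun ω' => min (f ω') (k : ℝ)) + (fun ω' => min (g ω') (k : ℝ))|F]) :=
      condExp_mono (integrable_min_nat (μ := μ) (hf.add hg) (fun ω => add_nonneg (hf0 ω) (hg0 ω)) k)
        (hi1.add hi2)
        (ae_of_all _ fun ω => min_add_le_aux (hf0 ω) (hg0 ω) (by positivity))
    have hadd := condExp_add (m := F) hi1 hi2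
    filter_upwards [hmono, hadd] with ω h1 h2
    exact h1.trans (le_of_eq h2)
  filter_upwards [ae_all_iff.2 h] with ω hω
  refine iSup_le fun k => ?_
  exact (ENNReal.ofReal_le_ofReal (hω k)).trans <| ENNReal.ofReal_add_le.trans <|
    add_le_add (le_iSup (fun k : ℕ => ENNReal.ofReal ((μ[fun ω' => min (f ω') (k : ℝ)|F]) ω)) k)
      (le_iSup (fun k : ℕ => ENNReal.ofReal ((μ[fun ω' => min (g ω') (k : ℝ)|F]) ω)) k)

lemma tnn_zero {μ : Measure Ω} [IsProbabilityMeasure μ] {F : MeasurableSpace Ω} :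
    tnn μ F (fun _ => (0 : ℝ)) = fun _ => 0 := by
  funext ω
  have h0 : ∀ k : ℕ, (fun _ : Ω => min (0 : ℝ) (k : ℝ)) = (0 : Ω → ℝ) := fun k =>
    funext fun _ => min_eq_left (by positivity)
  simp only [tnn, h0, condExp_zero, Pi.zero_apply, ENNReal.ofReal_zero, iSup_const]

lemma tnn_sum_le {μ : Measure Ω} [IsProbabilityMeasure μ] {F : MeasurableSpace Ω}
    {ι : Type*} (s : Finset ι) (f : ι → Ω → ℝ)
    (hf : ∀ i ∈ s, Measurable[m0] (f i)) (hf0 : ∀ i ∈ s, ∀ ω, 0 ≤ f i ω) :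
    ∀ᵐ ω ∂μ, tnn μ F (fun ω' => ∑ i ∈ s, f i ω') ω ≤ ∑ i ∈ s, tnn μ F (f i) ω := by
  classical
  induction s using Finset.induction_on with
  | empty =>
    refine ae_of_all _ fun ω => ?_
    simp only [Finset.sum_empty]
    rw [tnn_zero]
  | insert a s ha ih =>
    have hmeass : Measurable[m0] fun ω' => ∑ i ∈ s, f i ω' :=
      Finset.measurable_sum s fun i hi => hf i (Finset.mem_insert_of_mem hi)
    have h1 := tnn_add_le (μ := μ) (F := F) (hf a (Finset.mem_insert_self a s)) hmeass
      (hf0 a (Finset.mem_insert_self a s))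
      (fun ω => Finset.sum_nonneg fun i hi => hf0 i (Finset.mem_insert_of_mem hi) ω)
    have h2 := ih (fun i hi => hf i (Finset.mem_insert_of_mem hi))
      (fun i hi => hf0 i (Finset.mem_insert_of_mem hi))
    filter_upwards [h1, h2] with ω hω1 hω2
    simp only [Finset.sum_insert ha]
    exact le_trans (by simpa using hω1) (add_le_add le_rfl hω2)


lemma integrable_indicator_aux {μ : Measure Ω} {f : Ω → ℝ} {s : Set Ω}
    (hi : Integrable f μ) (hs : MeasurableSet[m0] s) : Integrable (s.indicator f) μ :=
  hi.indicator hs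

lemma tnn_smul_le {μ : Measure Ω} [IsProbabilityMeasure μ] {F : MeasurableSpace Ω}
    (hFm0 : F ≤ m0) {c f : Ω → ℝ}
    (hc : Measurable[F] c) (hc0 : ∀ ω, 0 ≤ c ω)
    (hf : Measurable[m0] f) (hf0 : ∀ ω, 0 ≤ f ω) :
    ∀ᵐ ω ∂μ, tnn μ F (fun ω' => c ω' * f ω') ω ≤ ENNReal.ofReal (c ω + 2) * tnn μ F f ω := by
  have hcf : Measurable[m0] fun ω => c ω * f ω := ((hc.mono hFm0 le_rfl)).mul hf
  have hcf0 : ∀ ω, 0 ≤ c ω * f ω := fun ω => mul_nonneg (hc0 ω) (hf0 ω)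
  -- key a.e. statement for each rational `q` and each level `k`
  have key : ∀ q : ℚ, ∀ k : ℕ, ∀ᵐ ω ∂μ, 1 ≤ (q : ℝ) → c ω ≤ (q : ℝ) →
      (μ[fun ω' => min (c ω' * f ω') (k : ℝ)|F]) ω ≤
        (q : ℝ) * (μ[fun ω' => min (f ω') (k : ℝ)|F]) ω := by
    intro q k
    by_cases hq1 : 1 ≤ (q : ℝ)
    swap
    · exact ae_of_all _ fun ω h1 _ => absurd h1 hq1
    set s : Set Ω := {ω | c ω ≤ (q : ℝ)} with hs_def
    have hsF : MeasurableSet[F] s := hc measurableSet_Iic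
    have hs0 : MeasurableSet[m0] s := hFm0 _ hsF
    have hi1 := integrable_min_nat (μ := μ) hcf hcf0 k
    have hi2 := integrable_min_nat (μ := μ) hf hf0 k
    have hi2q : Integrable (fun ω => (q : ℝ) * min (f ω) (k : ℝ)) μ := hi2.const_mul _
    have hptwise : ∀ ω, s.indicator (fun ω' => min (c ω' * f ω') (k : ℝ)) ω ≤
        s.indicator (fun ω' => (q : ℝ) * min (f ω') (k : ℝ)) ω := by
      intro ω
      by_cases hω : ω ∈ s
      · rw [Set.indicator_of_mem hω, Set.indicator_of_mem hω]
        refine le_trans (le_trans (min_le_min (mul_le_mul_of_nonneg_right hω (hf0 ω)) le_rfl) ?_)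
          (min_mul_le_aux hq1 (by positivity))
        exact le_rfl
      · rw [Set.indicator_of_notMem hω, Set.indicator_of_notMem hω]
    have hmono := condExp_mono (m := F) (integrable_indicator_aux hi1 hs0) (integrable_indicator_aux hi2q hs0)
      (ae_of_all _ hptwise)
    have hind1 := condExp_indicator (m := F) hi1 hsF
    have hind2 := condExp_indicator (m := F) hi2q hsF
    have hsmul : (μ[fun ω => (q : ℝ) * min (f ω) (k : ℝ)|F]) =ᵐ[μ]
        fun ω => (q : ℝ) * (μ[fun ω' => min (f ω') (k : ℝ)|F]) ω := by
      have := condExp_smul (m := F) (μ := μ) (q : ℝ) (fun ω => min (f ω) (k : ℝ))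
      refine EventuallyEq.trans (condExp_congr_ae (ae_of_all _ fun ω => ?_)) (this.trans ?_)
      · show (q : ℝ) * min (f ω) (k : ℝ) = ((q : ℝ) • fun ω' => min (f ω') (k : ℝ)) ω
        simp [smul_eq_mul]
      · exact ae_of_all _ fun ω => by simp [smul_eq_mul]
    filter_upwards [hmono, hind1, hind2, hsmul] with ω h1 h2 h3 h4
    intro _ hcω
    have hmem : ω ∈ s := hcω
    have e1 : (μ[s.indicator fun ω' => min (c ω' * f ω') (k : ℝ)|F]) ω =
        (μ[fun ω' => min (c ω' * f ω') (k : ℝ)|F]) ω := by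
      rw [h2, Set.indicator_of_mem hmem]
    have e2 : (μ[s.indicator fun ω' => (q : ℝ) * min (f ω') (k : ℝ)|F]) ω =
        (q : ℝ) * (μ[fun ω' => min (f ω') (k : ℝ)|F]) ω := by
      rw [h3, Set.indicator_of_mem hmem, h4]
    rw [← e1, ← e2]
    exact h1
  have key' : ∀ᵐ ω ∂μ, ∀ q : ℚ, ∀ k : ℕ, 1 ≤ (q : ℝ) → c ω ≤ (q : ℝ) →
      (μ[fun ω' => min (c ω' * f ω') (k : ℝ)|F]) ω ≤
        (q : ℝ) * (μ[fun ω' => min (f ω') (k : ℝ)|F]) ω :=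
    ae_all_iff.2 fun q => ae_all_iff.2 fun k => key q k
  filter_upwards [key'] with ω hω
  obtain ⟨q, hq1, hq2⟩ := exists_rat_btwn
    (show max 1 (c ω) < c ω + 2 by
      rcases max_cases 1 (c ω) with ⟨h, _⟩ | ⟨h, _⟩ <;> rw [h] <;> nlinarith [hc0 ω])
  have hq1' : 1 ≤ (q : ℝ) := le_of_lt (lt_of_le_of_lt (le_max_left _ _) hq1)
  have hqc : c ω ≤ (q : ℝ) := le_of_lt (lt_of_le_of_lt (le_max_right _ _) hq1)
  refine iSup_le fun k => ?_
  calc ENNReal.ofReal ((μ[fun ω' => min (c ω' * f ω') (k : ℝ)|F]) ω)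
      ≤ ENNReal.ofReal ((q : ℝ) * (μ[fun ω' => min (f ω') (k : ℝ)|F]) ω) :=
        ENNReal.ofReal_le_ofReal (hω q k hq1' hqc)
    _ = ENNReal.ofReal (q : ℝ) * ENNReal.ofReal ((μ[fun ω' => min (f ω') (k : ℝ)|F]) ω) :=
        ENNReal.ofReal_mul (by linarith)
    _ ≤ ENNReal.ofReal (c ω + 2) * tnn μ F f ω := by
        refine mul_le_mul' (ENNReal.ofReal_le_ofReal hq2.le) ?_
        exact le_iSup (fun k : ℕ => ENNReal.ofReal ((μ[fun ω' => min (f ω') (k : ℝ)|F]) ω)) k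

lemma tnn_measurable {μ : Measure Ω} [IsProbabilityMeasure μ] {F : MeasurableSpace Ω}
    (f : Ω → ℝ) : Measurable[F] (tnn μ F f) :=
  Measurable.iSup fun k =>
    Measurable.ennreal_ofReal (stronglyMeasurable_condExp.measurable)

lemma sum_rpow_le_aux {ι : Type*} (s : Finset ι) (t : ι → ℝ) (ht : ∀ i ∈ s, 0 ≤ t i)
    {p : ℝ} (hp : 1 ≤ p) :
    (∑ i ∈ s, t i) ^ p ≤ (s.card : ℝ) ^ p * ∑ i ∈ s, t i ^ p := by
  have hp0 : (0 : ℝ) < p := lt_of_lt_of_le one_pos hp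
  have hS0 : 0 ≤ ∑ i ∈ s, t i ^ p := Finset.sum_nonneg fun i hi => Real.rpow_nonneg (ht i hi) p
  have hbound : ∀ i ∈ s, t i ≤ (∑ j ∈ s, t j ^ p) ^ p⁻¹ := by
    intro i hi
    have h1 : t i ^ p ≤ ∑ j ∈ s, t j ^ p :=
      Finset.single_le_sum (fun j hj => Real.rpow_nonneg (ht j hj) p) hi
    have h2 := Real.rpow_le_rpow (Real.rpow_nonneg (ht i hi) p) h1 (inv_nonneg.2 hp0.le)
    rwa [Real.rpow_rpow_inv (ht i hi) hp0.ne'] at h2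
  have hsum : ∑ i ∈ s, t i ≤ (s.card : ℝ) * (∑ j ∈ s, t j ^ p) ^ p⁻¹ := by
    calc ∑ i ∈ s, t i ≤ ∑ _i ∈ s, (∑ j ∈ s, t j ^ p) ^ p⁻¹ := Finset.sum_le_sum hbound
      _ = (s.card : ℝ) * (∑ j ∈ s, t j ^ p) ^ p⁻¹ := by rw [Finset.sum_const, nsmul_eq_mul]
  calc (∑ i ∈ s, t i) ^ p ≤ ((s.card : ℝ) * (∑ j ∈ s, t j ^ p) ^ p⁻¹) ^ p :=
        Real.rpow_le_rpow (Finset.sum_nonneg ht) hsum hp0.le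
    _ = (s.card : ℝ) ^ p * ∑ j ∈ s, t j ^ p := by
        rw [Real.mul_rpow (by positivity) (Real.rpow_nonneg hS0 _),
          Real.rpow_inv_rpow hS0 hp0.ne']

lemma ptwise_bound {N : ℕ} {p : ℝ} (hp : 1 ≤ p) (a d : Fin N → ℝ) (g : ℝ) :
    |(∑ i, a i * d i) + g| ^ p ≤
      ∑ j : Option (Fin N),
        Option.elim j ((((N + 1 : ℕ) : ℝ)) ^ p * |g| ^ p)
          (fun i => ((((N + 1 : ℕ) : ℝ)) ^ p * |a i| ^ p) * |d i| ^ p) := by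
  classical
  set C : ℝ := (((N + 1 : ℕ) : ℝ)) ^ p with hC
  set t : Option (Fin N) → ℝ := fun j => Option.elim j |g| (fun i => |a i * d i|) with ht
  have habs : |(∑ i, a i * d i) + g| ≤ ∑ j : Option (Fin N), t j := by
    rw [Fintype.sum_option]
    calc |(∑ i, a i * d i) + g| ≤ |∑ i, a i * d i| + |g| := abs_add_le _ _
      _ ≤ (∑ i, |a i * d i|) + |g| :=
          add_le_add (Finset.abs_sum_le_sum_abs _ _) le_rfl
      _ = t none + ∑ i, t (some i) := by simp [t, add_comm]
  have h1 : |(∑ i, a i * d i) + g| ^ p ≤ (∑ j : Option (Fin N), t j) ^ p :=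
    Real.rpow_le_rpow (abs_nonneg _) habs (by linarith)
  have h2 := sum_rpow_le_aux Finset.univ t
    (fun j _ => by cases j <;> simp [t, abs_nonneg] <;> positivity) hp
  have hcard : ((Finset.univ : Finset (Option (Fin N))).card : ℝ) = ((N + 1 : ℕ) : ℝ) := by
    simp [Finset.card_univ]
  refine (h1.trans (h2.trans (le_of_eq ?_)))
  rw [hcard, ← hC, Finset.mul_sum]
  refine Finset.sum_congr rfl fun j _ => ?_
  cases j with
  | none => simp [t]
  | some i =>
    simp only [t, Option.elim]
    rw [abs_mul, Real.mul_rpow (abs_nonneg _) (abs_nonneg _)]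
    ring

lemma condExpAbsPow_eq_tnn (μ : Measure Ω) (F : MeasurableSpace Ω) (p : ℝ) (X : Ω → ℝ) :
    condExpAbsPow μ F p X = tnn μ F (fun ω => |X ω| ^ p) := rfl

lemma bdd_main {μ : Measure Ω} [IsProbabilityMeasure μ] {F G : MeasurableSpace Ω}
    (hFG : F ≤ G) (hG : G ≤ m0) {p : ℝ} (hp : 1 ≤ p) {N : ℕ}
    (Δ : Fin N → Ω → ℝ) (hΔmeas : ∀ i, Measurable[G] (Δ i))
    (hΔLp : ∀ i, MemCondLp μ F p (Δ i))
    (A : ℕ → Ω → Fin N → ℝ) (hAmeas : ∀ n, Measurable[F] (A n))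
    (hAbdd : ∀ᵐ ω ∂μ, ∀ i : Fin N, BddAbove (Set.range fun m => |A m ω i| ^ p))
    (Γ : ℕ → Ω → ℝ) (hΓmeas : ∀ n, Measurable[G] (Γ n)) (hΓbdd : BddCondLp μ F p Γ) :
    BddCondLp μ F p (fun n ω' => (∑ i, A n ω' i * Δ i ω') + Γ n ω') := by
  classical
  have hF : F ≤ m0 := hFG.trans hG
  have hp0 : (0 : ℝ) < p := lt_of_lt_of_le one_pos hp
  obtain ⟨YΓ, hYΓmeas, hYΓ⟩ := hΓbdd
  set C : ℝ := (((N + 1 : ℕ) : ℝ)) ^ p with hCdef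
  have hC0 : 0 ≤ C := Real.rpow_nonneg (by positivity) p
  -- measurable (in F) component maps
  have hAim : ∀ m (i : Fin N), Measurable[F] fun ω => A m ω i := fun m i =>
    (measurable_pi_apply i).comp (hAmeas m)
  have habs_rpow_cont : Continuous fun x : ℝ => |x| ^ p :=
    (Real.continuous_rpow_const hp0.le).comp continuous_abs
  -- the ENNReal-valued uniform bound on |A|^p
  set SA : Ω → ℝ≥0∞ := fun ω => ∑ i, ⨆ m : ℕ, ENNReal.ofReal (|A m ω i| ^ p) with hSAdef
  have hSAmeas : Measurable[F] SA :=
    Finset.measurable_sum _ fun i _ => Measurable.iSup fun m =>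
      (habs_rpow_cont.measurable.comp (hAim m i)).ennreal_ofReal
  have hSAfin : ∀ᵐ ω ∂μ, SA ω < ⊤ := by
    filter_upwards [hAbdd] with ω hω
    rw [hSAdef]
    refine ENNReal.sum_lt_top.2 fun i _ => ?_
    obtain ⟨M, hM⟩ := hω i
    refine lt_of_le_of_lt (iSup_le fun m => ENNReal.ofReal_le_ofReal
      (hM (Set.mem_range_self m))) ENNReal.ofReal_lt_top
  -- the dominating random variable
  set Z : Ω → ℝ≥0∞ := fun ω =>
      (∑ i, ENNReal.ofReal (C * (SA ω).toReal + 2) * condExpAbsPow μ F p (Δ i) ω)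
        + ENNReal.ofReal (C + 2) * ENNReal.ofReal (YΓ ω) with hZdef
  have hZmeas : Measurable[F] Z := by
    refine Measurable.add ?_ (measurable_const.mul hYΓmeas.ennreal_ofReal)
    refine Finset.measurable_sum _ fun i _ => Measurable.mul ?_ ?_
    · exact ((measurable_const.mul (ENNReal.measurable_toReal.comp hSAmeas)).add
        measurable_const).ennreal_ofReal
    · rw [condExpAbsPow_eq_tnn]; exact tnn_measurable _
  have hZfin : ∀ᵐ ω ∂μ, Z ω < ⊤ := by
    filter_upwards [ae_all_iff.2 hΔLp] with ω hω
    rw [hZdef]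
    refine ENNReal.add_lt_top.2 ⟨?_, ENNReal.mul_lt_top ENNReal.ofReal_lt_top
      ENNReal.ofReal_lt_top⟩
    exact ENNReal.sum_lt_top.2 fun i _ =>
      ENNReal.mul_lt_top ENNReal.ofReal_lt_top (hω i)
  refine ⟨fun ω => (Z ω).toReal, ENNReal.measurable_toReal.comp hZmeas, fun n => ?_⟩
  -- now the bound for a fixed `n`
  have hXm0 : Measurable[m0] fun ω' => (∑ i, A n ω' i * Δ i ω') + Γ n ω' := by
    refine Measurable.add ?_ ((hΓmeas n).mono hG le_rfl)
    exact Finset.measurable_sum _ fun i _ =>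
      (((hAim n i).mono hF le_rfl)).mul ((hΔmeas i).mono hG le_rfl)
  -- the Option-indexed family of dominating functions
  set gf : Option (Fin N) → Ω → ℝ := fun j ω' =>
    Option.elim j (C * |Γ n ω'| ^ p)
      (fun i => (C * |A n ω' i| ^ p) * |Δ i ω'| ^ p) with hgf
  have hgfmeas : ∀ j, Measurable[m0] (gf j) := by
    rintro (_ | i)
    · show Measurable[m0] fun ω' => C * |Γ n ω'| ^ p
      exact measurable_const.mul
        (habs_rpow_cont.measurable.comp ((hΓmeas n).mono hG le_rfl))
    · show Measurable[m0] fun ω' => (C * |A n ω' i| ^ p) * |Δ i ω'| ^ p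
      exact (measurable_const.mul
        (habs_rpow_cont.measurable.comp (((hAim n i).mono hF le_rfl)))).mul
        (habs_rpow_cont.measurable.comp ((hΔmeas i).mono hG le_rfl))
  have hgf0 : ∀ j ω', 0 ≤ gf j ω' := by
    rintro (_ | i) ω'
    · show 0 ≤ C * |Γ n ω'| ^ p
      exact mul_nonneg hC0 (Real.rpow_nonneg (abs_nonneg _) _)
    · show 0 ≤ (C * |A n ω' i| ^ p) * |Δ i ω'| ^ p
      exact mul_nonneg (mul_nonneg hC0 (Real.rpow_nonneg (abs_nonneg _) _))
        (Real.rpow_nonneg (abs_nonneg _) _)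
  have hstep1 : ∀ᵐ ω ∂μ,
      tnn μ F (fun ω' => |(∑ i, A n ω' i * Δ i ω') + Γ n ω'| ^ p) ω ≤
        tnn μ F (fun ω' => ∑ j : Option (Fin N), gf j ω') ω := by
    refine tnn_mono (habs_rpow_cont.measurable.comp hXm0)
      (Finset.measurable_sum _ fun j _ => hgfmeas j)
      (fun ω' => Real.rpow_nonneg (abs_nonneg _) _) (fun ω' => ?_)
    exact ptwise_bound hp (fun i => A n ω' i) (fun i => Δ i ω') (Γ n ω')
  have hstep2 := tnn_sum_le (μ := μ) (F := F) Finset.univ gf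
    (fun j _ => hgfmeas j) (fun j _ ω' => hgf0 j ω')
  -- bound each summand
  have hsome : ∀ i : Fin N, ∀ᵐ ω ∂μ,
      tnn μ F (gf (some i)) ω ≤
        ENNReal.ofReal (C * |A n ω i| ^ p + 2) * tnn μ F (fun ω' => |Δ i ω'| ^ p) ω := by
    intro i
    exact tnn_smul_le hF
      ((habs_rpow_cont.measurable.comp (hAim n i)).const_mul C)
      (fun ω => mul_nonneg hC0 (Real.rpow_nonneg (abs_nonneg _) _))
      (habs_rpow_cont.measurable.comp ((hΔmeas i).mono hG le_rfl))
      (fun ω => Real.rpow_nonneg (abs_nonneg _) _)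
  have hnone : ∀ᵐ ω ∂μ,
      tnn μ F (gf none) ω ≤
        ENNReal.ofReal (C + 2) * tnn μ F (fun ω' => |Γ n ω'| ^ p) ω :=
    tnn_smul_le hF (measurable_const (a := C)) (fun _ => hC0)
      (habs_rpow_cont.measurable.comp ((hΓmeas n).mono hG le_rfl))
      (fun ω => Real.rpow_nonneg (abs_nonneg _) _)
  filter_upwards [hstep1, hstep2, ae_all_iff.2 hsome, hnone, hSAfin, hZfin, hYΓ n]
    with ω h1 h2 h3 h4 hSAω hZω h5
  rw [ENNReal.ofReal_toReal hZω.ne]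
  have hAle : ∀ i : Fin N, |A n ω i| ^ p ≤ (SA ω).toReal := by
    intro i
    have hle : ENNReal.ofReal (|A n ω i| ^ p) ≤ SA ω := by
      refine le_trans (le_iSup (fun m : ℕ => ENNReal.ofReal (|A m ω i| ^ p)) n) ?_
      exact Finset.single_le_sum (f := fun i : Fin N => ⨆ m : ℕ,
        ENNReal.ofReal (|A m ω i| ^ p)) (fun _ _ => zero_le) (Finset.mem_univ i)
    have := ENNReal.toReal_mono hSAω.ne hle
    rwa [ENNReal.toReal_ofReal (Real.rpow_nonneg (abs_nonneg _) _)] at this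
  calc condExpAbsPow μ F p (fun ω' => (∑ i, A n ω' i * Δ i ω') + Γ n ω') ω
      = tnn μ F (fun ω' => |(∑ i, A n ω' i * Δ i ω') + Γ n ω'| ^ p) ω := rfl
    _ ≤ tnn μ F (fun ω' => ∑ j : Option (Fin N), gf j ω') ω := h1
    _ ≤ ∑ j : Option (Fin N), tnn μ F (gf j) ω := h2
    _ = tnn μ F (gf none) ω + ∑ i, tnn μ F (gf (some i)) ω := Fintype.sum_option _
    _ ≤ ENNReal.ofReal (C + 2) * ENNReal.ofReal (YΓ ω)
          + ∑ i, ENNReal.ofReal (C * (SA ω).toReal + 2) * condExpAbsPow μ F p (Δ i) ω := by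
        refine add_le_add ?_ ?_
        · refine h4.trans ?_
          refine mul_le_mul' le_rfl ?_
          rw [← condExpAbsPow_eq_tnn]
          exact h5
        · refine Finset.sum_le_sum fun i _ => ?_
          refine (h3 i).trans ?_
          refine mul_le_mul' (ENNReal.ofReal_le_ofReal ?_) le_rfl
          have := hAle i
          nlinarith [hC0]
    _ = Z ω := by rw [hZdef]; exact add_comm _ _

lemma bdd_zero {μ : Measure Ω} [IsProbabilityMeasure μ] {F : MeasurableSpace Ω}
    {p : ℝ} (hp : 1 ≤ p) : BddCondLp μ F p (fun _ _ => (0 : ℝ)) := by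
  have hp0 : p ≠ 0 := by positivity
  refine ⟨fun _ => 0, measurable_const, fun n => ae_of_all _ fun ω => ?_⟩
  have h0 : (fun _ : Ω => |(0 : ℝ)| ^ p) = fun _ : Ω => (0 : ℝ) :=
    funext fun _ => by rw [abs_zero, Real.zero_rpow hp0]
  rw [condExpAbsPow_eq_tnn, h0, tnn_zero]
  simp


/-- Let `ℱ ⊆ 𝒢`, `p ∈ [1,∞)` and `U : L^p_ℱ(𝒢) → L⁰(ℱ) ∪ {−∞}` be
`L⁰–L^p` upper semicontinuous.  If `Δ ∈ (L^p_ℱ(𝒢))^N`, `(A_n) ⊆ (L⁰(ℱ))^N` converges a.s.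
to `A`, and `(Γ_n)` is bounded in `L^p_ℱ(𝒢)` with `Γ_n → Γ` a.s., then
`limsup_n U(A_n·Δ + Γ_n) ≤ U(A·Δ + Γ)` a.s.  In particular the map `A ↦ U(A·Δ)` is
`L⁰`-upper semicontinuous. -/
theorem usc_of_l0_lp_usc
    (μ : Measure Ω) [IsProbabilityMeasure μ]
    (F G : MeasurableSpace Ω) (hFG : F ≤ G) (hG : G ≤ m0)
    (p : ℝ) (hp : 1 ≤ p) {N : ℕ}
    (U : (Ω → ℝ) → Ω → EReal)
    (husc : ∀ Xs : ℕ → Ω → ℝ, (∀ n, Measurable[G] (Xs n)) → BddCondLp μ F p Xs →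
      ∀ X : Ω → ℝ, Measurable[G] X →
      (∀ᵐ ω ∂μ, Filter.Tendsto (fun n => Xs n ω) Filter.atTop (nhds (X ω))) →
      ∀ᵐ ω ∂μ, Filter.limsup (fun n => U (Xs n) ω) Filter.atTop ≤ U X ω)
    (Δ : Fin N → Ω → ℝ) (hΔmeas : ∀ i, Measurable[G] (Δ i))
    (hΔLp : ∀ i, MemCondLp μ F p (Δ i))
    (A : ℕ → Ω → Fin N → ℝ) (hAmeas : ∀ n, Measurable[F] (A n))
    (Ainf : Ω → Fin N → ℝ) (hAinfmeas : Measurable[F] Ainf)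
    (hAtend : ∀ᵐ ω ∂μ, ∀ i, Filter.Tendsto (fun n => A n ω i) Filter.atTop (nhds (Ainf ω i)))
    (Γ : ℕ → Ω → ℝ) (hΓmeas : ∀ n, Measurable[G] (Γ n)) (hΓbdd : BddCondLp μ F p Γ)
    (Ginf : Ω → ℝ) (hGinfmeas : Measurable[G] Ginf)
    (hΓtend : ∀ᵐ ω ∂μ, Filter.Tendsto (fun n => Γ n ω) Filter.atTop (nhds (Ginf ω))) :
    (∀ᵐ ω ∂μ,
      Filter.limsup (fun n => U (fun ω' => (∑ i, A n ω' i * Δ i ω') + Γ n ω') ω)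
          Filter.atTop ≤
        U (fun ω' => (∑ i, Ainf ω' i * Δ i ω') + Ginf ω') ω) ∧
    -- in particular (Γ ≡ 0): the map `A ↦ U(A·Δ)` is `L⁰`-upper semicontinuous
    (∀ B : ℕ → Ω → Fin N → ℝ, (∀ n, Measurable[F] (B n)) →
      ∀ Binf : Ω → Fin N → ℝ, Measurable[F] Binf →
      (∀ᵐ ω ∂μ, ∀ i, Filter.Tendsto (fun n => B n ω i) Filter.atTop (nhds (Binf ω i))) →
      ∀ᵐ ω ∂μ,
        Filter.limsup (fun n => U (fun ω' => ∑ i, B n ω' i * Δ i ω') ω) Filter.atTop ≤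
          U (fun ω' => ∑ i, Binf ω' i * Δ i ω') ω) := by
  have hF : F ≤ m0 := hFG.trans hG
  have hp0 : (0 : ℝ) < p := lt_of_lt_of_le one_pos hp
  have main : ∀ A : ℕ → Ω → Fin N → ℝ, (∀ n, Measurable[F] (A n)) →
      ∀ Ainf : Ω → Fin N → ℝ, Measurable[F] Ainf →
      (∀ᵐ ω ∂μ, ∀ i, Filter.Tendsto (fun n => A n ω i) Filter.atTop (nhds (Ainf ω i))) →
      ∀ Γ : ℕ → Ω → ℝ, (∀ n, Measurable[G] (Γ n)) → BddCondLp μ F p Γ →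
      ∀ Ginf : Ω → ℝ, Measurable[G] Ginf →
      (∀ᵐ ω ∂μ, Filter.Tendsto (fun n => Γ n ω) Filter.atTop (nhds (Ginf ω))) →
      ∀ᵐ ω ∂μ,
        Filter.limsup (fun n => U (fun ω' => (∑ i, A n ω' i * Δ i ω') + Γ n ω') ω)
          Filter.atTop ≤ U (fun ω' => (∑ i, Ainf ω' i * Δ i ω') + Ginf ω') ω := by
    intro A hAmeas Ainf hAinfmeas hAtend Γ hΓmeas hΓbdd Ginf hGinfmeas hΓtend
    have hAbdd : ∀ᵐ ω ∂μ, ∀ i : Fin N, BddAbove (Set.range fun m => |A m ω i| ^ p) := by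
      filter_upwards [hAtend] with ω hω i
      exact (((hω i).abs).rpow_const (Or.inr hp0.le)).bddAbove_range
    refine husc _ ?_ ?_ _ ?_ ?_
    · intro n
      refine Measurable.add ?_ (hΓmeas n)
      exact Finset.measurable_sum _ fun i _ =>
        (((measurable_pi_apply i).comp (hAmeas n)).mono hFG le_rfl).mul (hΔmeas i)
    · exact bdd_main hFG hG hp Δ hΔmeas hΔLp A hAmeas hAbdd Γ hΓmeas hΓbdd
    · refine Measurable.add ?_ hGinfmeas
      exact Finset.measurable_sum _ fun i _ =>
        (((measurable_pi_apply i).comp hAinfmeas).mono hFG le_rfl).mul (hΔmeas i)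
    · filter_upwards [hAtend, hΓtend] with ω h1 h2
      exact (tendsto_finset_sum _ fun i _ => (h1 i).mul tendsto_const_nhds).add h2
  constructor
  · exact main A hAmeas Ainf hAinfmeas hAtend Γ hΓmeas hΓbdd Ginf hGinfmeas hΓtend
  · intro B hB Binf hBinf hBtend
    have h := main B hB Binf hBinf hBtend (fun _ _ => 0) (fun _ => measurable_const)
      (bdd_zero hp) (fun _ => 0) measurable_const
      (ae_of_all _ fun ω => tendsto_const_nhds)
    simpa using h
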